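/- Let S̃ be an n×n complex unitary matrix and define K̃ = Iₙ ⊗ [1, -i]ᵀ (a 2n×n complex matrix). Then the real matrix S = (1/2)(K̃ S̃ K̃* + K̃^# S̃^# K̃ᵀ) is orthogonal (SᵀS = S Sᵀ = I_{2n}) and symplectic with respect to J = Iₙ ⊗ [[0,1],[-1,0]], i.e., Sᵀ J S = J. -/

import Mathlib

open Matrix

/-- `K̃ = Iₙ ⊗ [1, -i]ᵀ`, a `2n × n` complex matrix (rows indexed by `Fin n × Fin 2`). -/
def Ktil (n : ℕ) : Matrix (Fin n × Fin 2) (Fin n) ℂ :=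
  Matrix.of fun p j =>
    if p.1 = j then (if p.2 = 0 then 1 else -Complex.I) else 0

/-- `J = Iₙ ⊗ [[0,1],[-1,0]]`. -/
def Jmat (n : ℕ) : Matrix (Fin n × Fin 2) (Fin n × Fin 2) ℂ :=
  Matrix.of fun p q =>
    if p.1 = q.1 then
      (if p.2 = 0 ∧ q.2 = 1 then 1 else if p.2 = 1 ∧ q.2 = 0 then -1 else 0)
    else 0

private lemma qmos_f1 (n : ℕ) :
    (Ktil n).conjTranspose * Ktil n = (2:ℂ) • 1 := by
  ext i j
  simp only [Matrix.mul_apply, conjTranspose_apply, Ktil, Matrix.of_apply,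
    Fintype.sum_prod_type, Fin.sum_univ_two, Matrix.smul_apply, Matrix.one_apply, smul_eq_mul]
  by_cases h : i = j <;>
    simp [h, eq_comm, Finset.sum_add_distrib, Finset.sum_ite_eq', apply_ite (starRingEnd ℂ),
      mul_ite, ite_and, Complex.ext_iff] <;> norm_num

private lemma qmos_f2 (n : ℕ) : (Ktil n).transpose * Ktil n = 0 := by
  ext i j
  simp only [Matrix.mul_apply, transpose_apply, Ktil, Matrix.of_apply,
    Fintype.sum_prod_type, Fin.sum_univ_two, Matrix.zero_apply]
  by_cases h : i = j <;>
    simp [h, eq_comm, Finset.sum_add_distrib, Finset.sum_ite_eq', mul_ite, ite_and,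
      Complex.ext_iff] <;> norm_num

private lemma qmos_f3 (n : ℕ) :
    (Ktil n).transpose * (Ktil n).map (starRingEnd ℂ) = (2:ℂ) • 1 := by
  ext i j
  simp only [Matrix.mul_apply, transpose_apply, map_apply, Ktil, Matrix.of_apply,
    Fintype.sum_prod_type, Fin.sum_univ_two, Matrix.smul_apply, Matrix.one_apply, smul_eq_mul]
  by_cases h : i = j <;>
    simp [h, eq_comm, Finset.sum_add_distrib, Finset.sum_ite_eq', apply_ite (starRingEnd ℂ),
      mul_ite, ite_and, Complex.ext_iff] <;> norm_num

private lemma qmos_f4 (n : ℕ) :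
    (Ktil n).conjTranspose * (Ktil n).map (starRingEnd ℂ) = 0 := by
  ext i j
  simp only [Matrix.mul_apply, conjTranspose_apply, map_apply, Ktil, Matrix.of_apply,
    Fintype.sum_prod_type, Fin.sum_univ_two, Matrix.zero_apply]
  by_cases h : i = j <;>
    simp [h, eq_comm, Finset.sum_add_distrib, Finset.sum_ite_eq', apply_ite (starRingEnd ℂ),
      mul_ite, ite_and, Complex.ext_iff] <;> norm_num

private lemma qmos_f7 (n : ℕ) :
    Ktil n * (Ktil n).conjTranspose +
      (Ktil n).map (starRingEnd ℂ) * (Ktil n).transpose = (2:ℂ) • 1 := by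
  ext ⟨i1, i2⟩ ⟨j1, j2⟩
  simp only [Matrix.add_apply, Matrix.mul_apply, conjTranspose_apply, transpose_apply,
    map_apply, Ktil, Matrix.of_apply, Matrix.smul_apply, Matrix.one_apply, smul_eq_mul,
    mul_ite, ite_mul, mul_zero, zero_mul, apply_ite (starRingEnd ℂ)]
  by_cases h : i1 = j1 <;>
    fin_cases i2 <;> fin_cases j2 <;>
      simp [h, eq_comm, Prod.ext_iff, Finset.sum_ite_eq', Complex.ext_iff] <;> norm_num

private lemma qmos_hJ (n : ℕ) :
    Jmat n = (Complex.I/2) •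
      ((Ktil n).map (starRingEnd ℂ) * (Ktil n).transpose -
        Ktil n * (Ktil n).conjTranspose) := by
  ext ⟨i1, i2⟩ ⟨j1, j2⟩
  simp only [Jmat, Matrix.smul_apply, Matrix.sub_apply, Matrix.mul_apply,
    conjTranspose_apply, transpose_apply, map_apply, Ktil, Matrix.of_apply,
    mul_ite, ite_mul, mul_zero, zero_mul, apply_ite (starRingEnd ℂ), smul_eq_mul]
  by_cases h : i1 = j1 <;>
    fin_cases i2 <;> fin_cases j2 <;>
      simp [h, eq_comm, Finset.sum_ite_eq', Complex.ext_iff] <;> norm_num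

private lemma qmos_g1 (n : ℕ) {p : Type*} [Fintype p] (X : Matrix (Fin n) p ℂ) :
    (Ktil n).conjTranspose * (Ktil n * X) = (2:ℂ) • X := by
  rw [← Matrix.mul_assoc, qmos_f1, Matrix.smul_mul, Matrix.one_mul]

private lemma qmos_g2 (n : ℕ) {p : Type*} [Fintype p] (X : Matrix (Fin n) p ℂ) :
    (Ktil n).transpose * (Ktil n * X) = 0 := by
  rw [← Matrix.mul_assoc, qmos_f2, Matrix.zero_mul]

private lemma qmos_g3 (n : ℕ) {p : Type*} [Fintype p] (X : Matrix (Fin n) p ℂ) :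
    (Ktil n).transpose * ((Ktil n).map (starRingEnd ℂ) * X) = (2:ℂ) • X := by
  rw [← Matrix.mul_assoc, qmos_f3, Matrix.smul_mul, Matrix.one_mul]

private lemma qmos_g4 (n : ℕ) {p : Type*} [Fintype p] (X : Matrix (Fin n) p ℂ) :
    (Ktil n).conjTranspose * ((Ktil n).map (starRingEnd ℂ) * X) = 0 := by
  rw [← Matrix.mul_assoc, qmos_f4, Matrix.zero_mul]

/-- for a unitary `S̃`, the matrix
`S = (1/2)(K̃ S̃ K̃* + K̃^# S̃^# K̃ᵀ)` has real entries, is orthogonal and is symplectic. -/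
theorem quadrature_matrix_orthogonal_symplectic (n : ℕ)
    (St : Matrix (Fin n) (Fin n) ℂ)
    (hUnitary : St.conjTranspose * St = 1 ∧ St * St.conjTranspose = 1)
    (S : Matrix (Fin n × Fin 2) (Fin n × Fin 2) ℂ)
    (hS : S = (1/2 : ℂ) •
      (Ktil n * St * (Ktil n).conjTranspose +
        (Ktil n).map (starRingEnd ℂ) * St.map (starRingEnd ℂ) * (Ktil n).transpose)) :
    (∀ p q, (S p q).im = 0) ∧
    S.transpose * S = 1 ∧ S * S.transpose = 1 ∧
    S.transpose * Jmat n * S = Jmat n := by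
  obtain ⟨hU1, hU2⟩ := hUnitary
  have hKHm : ((Ktil n).conjTranspose).map (starRingEnd ℂ) = (Ktil n).transpose := by
    ext i j; simp [conjTranspose_apply]
  have hKHt : ((Ktil n).conjTranspose).transpose = (Ktil n).map (starRingEnd ℂ) := by
    ext i j; simp [conjTranspose_apply]
  have hKcT : ((Ktil n).map (starRingEnd ℂ)).transpose = (Ktil n).conjTranspose := by
    ext i j; simp [conjTranspose_apply]
  have hStcT : (St.map (starRingEnd ℂ)).transpose = St.conjTranspose := by
    ext i j; simp [conjTranspose_apply]
  have hStHm : (St.conjTranspose).map (starRingEnd ℂ) = St.transpose := by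
    ext i j; simp [conjTranspose_apply]
  have h5 : St.transpose * St.map (starRingEnd ℂ) = 1 := by
    have h := congrArg (fun M => M.map (starRingEnd ℂ)) hU1
    simpa [Matrix.map_mul, hStHm] using h
  have h5' : St.map (starRingEnd ℂ) * St.transpose = 1 := by
    have h := congrArg (fun M => M.map (starRingEnd ℂ)) hU2
    simpa [Matrix.map_mul, hStHm] using h
  -- unitarity helpers, specialized
  have g5 : ∀ X : Matrix (Fin n) (Fin n × Fin 2) ℂ,
      St.transpose * (St.map (starRingEnd ℂ) * X) = X := by
    intro X; rw [← Matrix.mul_assoc, h5, Matrix.one_mul]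
  have g5' : ∀ X : Matrix (Fin n) (Fin n × Fin 2) ℂ,
      St.map (starRingEnd ℂ) * (St.transpose * X) = X := by
    intro X; rw [← Matrix.mul_assoc, h5', Matrix.one_mul]
  have g6 : ∀ X : Matrix (Fin n) (Fin n × Fin 2) ℂ,
      St.conjTranspose * (St * X) = X := by
    intro X; rw [← Matrix.mul_assoc, hU1, Matrix.one_mul]
  have g6' : ∀ X : Matrix (Fin n) (Fin n × Fin 2) ℂ,
      St * (St.conjTranspose * X) = X := by
    intro X; rw [← Matrix.mul_assoc, hU2, Matrix.one_mul]
  -- realness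
  have hL2 : (Ktil n).map (starRingEnd ℂ) * St.map (starRingEnd ℂ) * (Ktil n).transpose
      = ((Ktil n) * St * (Ktil n).conjTranspose).map (starRingEnd ℂ) := by
    rw [Matrix.map_mul, Matrix.map_mul, hKHm]
  have hreal : ∀ p q, (S p q).im = 0 := by
    intro p q
    rw [hS, hL2]
    simp only [Matrix.smul_apply, Matrix.add_apply, Matrix.map_apply, smul_eq_mul]
    rw [Complex.add_conj]
    simp
  -- transpose of S
  have hST : S.transpose = (1/2 : ℂ) •
      ((Ktil n).map (starRingEnd ℂ) * St.transpose * (Ktil n).transpose +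
        Ktil n * St.conjTranspose * (Ktil n).conjTranspose) := by
    rw [hS]
    simp only [Matrix.transpose_smul, Matrix.transpose_add, Matrix.transpose_mul,
      Matrix.transpose_transpose, hKHt, hKcT, hStcT, ← Matrix.mul_assoc]
  -- abbreviations via notation-free terms
  -- product term lemmas
  have t11 : ((Ktil n).map (starRingEnd ℂ) * St.transpose * (Ktil n).transpose) *
      (Ktil n * St * (Ktil n).conjTranspose) = 0 := by
    simp only [Matrix.mul_assoc, qmos_g2, Matrix.mul_zero]
  have t12 : ((Ktil n).map (starRingEnd ℂ) * St.transpose * (Ktil n).transpose) *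
      ((Ktil n).map (starRingEnd ℂ) * St.map (starRingEnd ℂ) * (Ktil n).transpose) =
      (2:ℂ) • ((Ktil n).map (starRingEnd ℂ) * (Ktil n).transpose) := by
    simp only [Matrix.mul_assoc, qmos_g3, Matrix.mul_smul, g5]
  have t13 : (Ktil n * St.conjTranspose * (Ktil n).conjTranspose) *
      (Ktil n * St * (Ktil n).conjTranspose) =
      (2:ℂ) • (Ktil n * (Ktil n).conjTranspose) := by
    simp only [Matrix.mul_assoc, qmos_g1, Matrix.mul_smul, g6]
  have t14 : (Ktil n * St.conjTranspose * (Ktil n).conjTranspose) *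
      ((Ktil n).map (starRingEnd ℂ) * St.map (starRingEnd ℂ) * (Ktil n).transpose) = 0 := by
    simp only [Matrix.mul_assoc, qmos_g4, Matrix.mul_zero]
  have hTS : S.transpose * S = 1 := by
    rw [hST, hS, Matrix.smul_mul, Matrix.mul_smul, smul_smul, Matrix.add_mul,
      Matrix.mul_add, Matrix.mul_add, t11, t12, t13, t14, zero_add, add_zero,
      ← smul_add, add_comm ((Ktil n).map (starRingEnd ℂ) * (Ktil n).transpose),
      qmos_f7, smul_smul, smul_smul]
    norm_num
  -- S * Sᵀ
  have t21 : (Ktil n * St * (Ktil n).conjTranspose) *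
      ((Ktil n).map (starRingEnd ℂ) * St.transpose * (Ktil n).transpose) = 0 := by
    simp only [Matrix.mul_assoc, qmos_g4, Matrix.mul_zero]
  have t22 : (Ktil n * St * (Ktil n).conjTranspose) *
      (Ktil n * St.conjTranspose * (Ktil n).conjTranspose) =
      (2:ℂ) • (Ktil n * (Ktil n).conjTranspose) := by
    simp only [Matrix.mul_assoc, qmos_g1, Matrix.mul_smul, g6']
  have t23 : ((Ktil n).map (starRingEnd ℂ) * St.map (starRingEnd ℂ) * (Ktil n).transpose) *
      ((Ktil n).map (starRingEnd ℂ) * St.transpose * (Ktil n).transpose) =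
      (2:ℂ) • ((Ktil n).map (starRingEnd ℂ) * (Ktil n).transpose) := by
    simp only [Matrix.mul_assoc, qmos_g3, Matrix.mul_smul, g5']
  have t24 : ((Ktil n).map (starRingEnd ℂ) * St.map (starRingEnd ℂ) * (Ktil n).transpose) *
      (Ktil n * St.conjTranspose * (Ktil n).conjTranspose) = 0 := by
    simp only [Matrix.mul_assoc, qmos_g2, Matrix.mul_zero]
  have hST' : S * S.transpose = 1 := by
    rw [hST, hS, Matrix.smul_mul, Matrix.mul_smul, smul_smul, Matrix.add_mul,
      Matrix.mul_add, Matrix.mul_add, t21, t22, t23, t24, zero_add, add_zero,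
      ← smul_add, qmos_f7, smul_smul, smul_smul]
    norm_num
  -- symplectic
  have u1 : ((Ktil n).map (starRingEnd ℂ) * (Ktil n).transpose) *
      (Ktil n * St * (Ktil n).conjTranspose) = 0 := by
    simp only [Matrix.mul_assoc, qmos_g2, Matrix.mul_zero]
  have u2 : ((Ktil n).map (starRingEnd ℂ) * (Ktil n).transpose) *
      ((Ktil n).map (starRingEnd ℂ) * St.map (starRingEnd ℂ) * (Ktil n).transpose) =
      (2:ℂ) • ((Ktil n).map (starRingEnd ℂ) * (St.map (starRingEnd ℂ) * (Ktil n).transpose)) := by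
    simp only [Matrix.mul_assoc, qmos_g3, Matrix.mul_smul]
  have u3 : (Ktil n * (Ktil n).conjTranspose) *
      (Ktil n * St * (Ktil n).conjTranspose) =
      (2:ℂ) • (Ktil n * (St * (Ktil n).conjTranspose)) := by
    simp only [Matrix.mul_assoc, qmos_g1, Matrix.mul_smul]
  have u4 : (Ktil n * (Ktil n).conjTranspose) *
      ((Ktil n).map (starRingEnd ℂ) * St.map (starRingEnd ℂ) * (Ktil n).transpose) = 0 := by
    simp only [Matrix.mul_assoc, qmos_g4, Matrix.mul_zero]
  have hDY : ((Ktil n).map (starRingEnd ℂ) * (Ktil n).transpose -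
        Ktil n * (Ktil n).conjTranspose) *
      (Ktil n * St * (Ktil n).conjTranspose +
        (Ktil n).map (starRingEnd ℂ) * St.map (starRingEnd ℂ) * (Ktil n).transpose) =
      (2:ℂ) • ((Ktil n).map (starRingEnd ℂ) * (St.map (starRingEnd ℂ) * (Ktil n).transpose)) -
      (2:ℂ) • (Ktil n * (St * (Ktil n).conjTranspose)) := by
    rw [Matrix.sub_mul, Matrix.mul_add, Matrix.mul_add, u1, u2, u3, u4, zero_add, add_zero]
  have v1 : ((Ktil n).map (starRingEnd ℂ) * St.transpose * (Ktil n).transpose) *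
      ((Ktil n).map (starRingEnd ℂ) * (St.map (starRingEnd ℂ) * (Ktil n).transpose)) =
      (2:ℂ) • ((Ktil n).map (starRingEnd ℂ) * (Ktil n).transpose) := by
    simp only [Matrix.mul_assoc, qmos_g3, Matrix.mul_smul, g5]
  have v2 : (Ktil n * St.conjTranspose * (Ktil n).conjTranspose) *
      ((Ktil n).map (starRingEnd ℂ) * (St.map (starRingEnd ℂ) * (Ktil n).transpose)) = 0 := by
    simp only [Matrix.mul_assoc, qmos_g4, Matrix.mul_zero]
  have v3 : ((Ktil n).map (starRingEnd ℂ) * St.transpose * (Ktil n).transpose) *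
      (Ktil n * (St * (Ktil n).conjTranspose)) = 0 := by
    simp only [Matrix.mul_assoc, qmos_g2, Matrix.mul_zero]
  have v4 : (Ktil n * St.conjTranspose * (Ktil n).conjTranspose) *
      (Ktil n * (St * (Ktil n).conjTranspose)) =
      (2:ℂ) • (Ktil n * (Ktil n).conjTranspose) := by
    simp only [Matrix.mul_assoc, qmos_g1, Matrix.mul_smul, g6]
  have hsymp : S.transpose * Jmat n * S = Jmat n := by
    rw [qmos_hJ, hST, hS, Matrix.mul_assoc]
    simp only [Matrix.smul_mul, Matrix.mul_smul, smul_smul]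
    rw [hDY]
    simp only [Matrix.mul_sub, Matrix.mul_smul, Matrix.add_mul, v1, v2, v3, v4,
      add_zero, zero_add, smul_smul, ← smul_sub]
    congr 1
    ring
  exact ⟨hreal, hTS, hST', hsymp⟩
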